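/- For any positive integer j and any graph G, the lower j-annihilation number c_j(G) is at most the j-independence number α_j(G). -/

import Mathlib

open Finset

namespace DSI

variable {V : Type*} (G : SimpleGraph V) [Fintype V] [DecidableEq V] [DecidableRel G.Adj]

/-- The degree sequence of `G`, sorted in non-decreasing order. -/
def dseq : List ℕ := (Finset.univ.val.map (fun v => G.degree v)).sort (· ≤ ·)

/-- The sum of the `k` smallest degrees, `Σ_{i=1}^k d_i`. -/
def sumSmallest (k : ℕ) : ℕ := ((dseq G).take k).sum

/-- The sum of the `k` largest degrees, `Σ_{i=1}^k d_{n-i+1}`. -/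
def sumLargest (k : ℕ) : ℕ := ((dseq G).reverse.take k).sum

/-- The number of edges `m(G)`. -/
def esize : ℕ := G.edgeFinset.card

/-- `m[S]`: the number of edges of the subgraph induced by `S`. -/
def mOn (S : Finset V) : ℕ := (S.sym2.filter (fun e => e ∈ G.edgeSet)).card

/-- A set `I` is `j`-independent if every vertex of `I` has fewer than `j` neighbours in `I`,
i.e. the induced subgraph has maximum degree `< j`. -/
def JIndep (j : ℕ) (I : Finset V) : Prop := ∀ v ∈ I, (I.filter (G.Adj v)).card < j

/-- The `j`-independence number `α_j(G)`. -/
noncomputable def alphaJ (j : ℕ) : ℕ := sSup {k | ∃ I : Finset V, JIndep G j I ∧ I.card = k}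

/-- The family `F` of maximum `j`-independent sets. -/
noncomputable def maxJIndep (j : ℕ) : Set (Finset V) :=
  {S | JIndep G j S ∧ S.card = alphaJ G j}

/-- `max_{S ∈ F} (m[V−S] − m[S])`. -/
noncomputable def fU (j : ℕ) : ℤ :=
  sSup ((fun S : Finset V => (mOn G Sᶜ : ℤ) - (mOn G S : ℤ)) '' maxJIndep G j)

/-- `min_{S ∈ F} (m[V−S] − m[S])`. -/
noncomputable def fL (j : ℕ) : ℤ :=
  sInf ((fun S : Finset V => (mOn G Sᶜ : ℤ) - (mOn G S : ℤ)) '' maxJIndep G j)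

/-- The upper `j`-annihilation number `a_j(G)`. -/
noncomputable def aJ (j : ℕ) : ℕ :=
  sSup {k | k ≤ Fintype.card V ∧ (sumSmallest G k : ℤ) + fU G j ≤ (esize G : ℤ)}

/-- The lower `j`-annihilation number `c_j(G)`. -/
noncomputable def cJ (j : ℕ) : ℕ :=
  sInf {k | k ≤ Fintype.card V ∧ (esize G : ℤ) ≤ (sumLargest G k : ℤ) + fL G j}

/-- The annihilation number `a(G)`. -/
noncomputable def annihilation : ℕ :=
  sSup {k | k ≤ Fintype.card V ∧ sumSmallest G k ≤ esize G}

/-- An independent set. -/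
def IndepSet (I : Finset V) : Prop := ∀ v ∈ I, ∀ w ∈ I, ¬ G.Adj v w

/-- The independence number `α(G)`. -/
noncomputable def alpha : ℕ := sSup {k | ∃ I : Finset V, IndepSet G I ∧ I.card = k}

end DSI

lemma DSIaux_take_mono (a : ℕ) (t : List ℕ) (ha : ∀ b ∈ t, b ≤ a) (k : ℕ) :
    (t.take k).sum ≤ ((a :: t).take k).sum := by
  cases k with
  | zero => simp
  | succ k =>
    rw [List.take_succ, List.sum_append, List.take_cons (Nat.succ_pos k), List.sum_cons,
      Nat.succ_sub_one]
    have : (t[k]?.toList).sum ≤ a := by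
      cases h : t[k]? with
      | none => simp
      | some x =>
        have hx : x ∈ t := by
          obtain ⟨hk, rfl⟩ := List.getElem?_eq_some_iff.mp h
          exact List.getElem_mem hk
        simpa using ha _ hx
    omega

lemma DSIaux_sub_sum_le_take : ∀ (l : List ℕ), l.Pairwise (fun a b => b ≤ a) →
    ∀ s : Multiset ℕ, s ≤ ↑l → s.sum ≤ (l.take (Multiset.card s)).sum := by
  intro l
  induction l with
  | nil =>
    intro _ s hs
    have : s = 0 := Multiset.le_zero.mp (by simpa using hs)
    simp [this]
  | cons a t ih =>
    intro hl s hs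
    have hat : ∀ b ∈ t, b ≤ a := fun b hb => (List.pairwise_cons.mp hl).1 b hb
    have htt : List.Pairwise (fun a b => b ≤ a) t := (List.pairwise_cons.mp hl).2
    have herase : (↑(a :: t) : Multiset ℕ).erase a = ↑t := by simp
    by_cases ha : a ∈ s
    · have hle : s.erase a ≤ ↑t := by
        have := Multiset.erase_le_erase a hs
        rwa [herase] at this
      have h1 := ih htt (s.erase a) hle
      have hpos : 0 < Multiset.card s := Multiset.card_pos_iff_exists_mem.mpr ⟨a, ha⟩
      have hcard : Multiset.card s = Multiset.card (s.erase a) + 1 := by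
        rw [Multiset.card_erase_of_mem ha]; exact (Nat.succ_pred_eq_of_pos hpos).symm
      have hsum : s.sum = a + (s.erase a).sum := (Multiset.sum_erase ha).symm
      rw [hcard, hsum, List.take_cons (Nat.succ_pos _), List.sum_cons, Nat.succ_sub_one]
      omega
    · have hle : s ≤ ↑t := by
        have := Multiset.erase_le_erase a hs
        rwa [herase, Multiset.erase_of_notMem ha] at this
      exact (ih htt s hle).trans (DSIaux_take_mono a t hat _)

open Finset in
set_option linter.unusedSectionVars false in
variable {V : Type*} (G : SimpleGraph V) [Fintype V] [DecidableEq V] [DecidableRel G.Adj] in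
lemma DSIaux_prod_filter_card (A B : Finset V) :
    ((A ×ˢ B).filter fun p => G.Adj p.1 p.2).card = ∑ v ∈ A, (B.filter (G.Adj v)).card := by
  rw [Finset.card_eq_sum_card_fiberwise (f := Prod.fst) (t := A)
    (fun p hp => (Finset.mem_product.mp (Finset.mem_filter.mp hp).1).1)]
  refine Finset.sum_congr rfl fun v hv => ?_
  rw [show (((A ×ˢ B).filter fun p => G.Adj p.1 p.2).filter fun p => p.1 = v)
      = {v} ×ˢ (B.filter (G.Adj v)) from ?_]
  · simp
  · ext ⟨x, y⟩
    simp only [Finset.mem_filter, Finset.mem_product, Finset.mem_singleton]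
    constructor
    · rintro ⟨⟨⟨hx, hy⟩, hadj⟩, rfl⟩; exact ⟨rfl, hy, hadj⟩
    · rintro ⟨rfl, hy, hadj⟩; exact ⟨⟨⟨hv, hy⟩, hadj⟩, rfl⟩

open Finset in
set_option linter.unusedSectionVars false in
variable {V : Type*} (G : SimpleGraph V) [Fintype V] [DecidableEq V] [DecidableRel G.Adj] in
lemma DSIaux_handshake (A : Finset V) :
    ∑ v ∈ A, (A.filter (G.Adj v)).card = 2 * DSI.mOn G A := by
  rw [← DSIaux_prod_filter_card]
  rw [Finset.card_eq_sum_card_fiberwise (f := fun p : V × V => Sym2.mk p.1 p.2)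
      (t := A.sym2.filter (fun e => e ∈ G.edgeSet)) (fun p hp => ?_)]
  swap
  · simp only [Finset.mem_coe, Finset.mem_filter, Finset.mem_product] at hp ⊢
    obtain ⟨a, b⟩ := p
    exact ⟨Finset.mk_mem_sym2_iff.mpr ⟨hp.1.1, hp.1.2⟩, hp.2⟩
  rw [DSI.mOn]
  refine Eq.trans (Finset.sum_congr rfl fun e => Sym2.inductionOn e fun x y he => ?_)
    (by rw [Finset.sum_const, smul_eq_mul, mul_comm])
  simp only [Finset.mem_filter, Finset.mk_mem_sym2_iff, SimpleGraph.mem_edgeSet] at he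
  obtain ⟨⟨hx, hy⟩, hadj⟩ := he
  have hxy : x ≠ y := hadj.ne
  rw [show (((A ×ˢ A).filter fun p => G.Adj p.1 p.2).filter fun p => Sym2.mk p.1 p.2 = s(x, y))
      = {(x, y), (y, x)} from ?_]
  · rw [Finset.card_insert_of_notMem (by simp [Prod.ext_iff]; intro h; exact absurd h hxy),
      Finset.card_singleton]
  · ext ⟨u, w⟩
    simp only [Finset.mem_filter, Finset.mem_product, Finset.mem_insert, Finset.mem_singleton,
      Sym2.eq_iff, Prod.mk.injEq, Prod.swap_prod_mk]
    constructor
    · rintro ⟨-, h⟩; exact h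
    · rintro (⟨rfl, rfl⟩ | ⟨rfl, rfl⟩)
      · exact ⟨⟨⟨hx, hy⟩, hadj⟩, Or.inl ⟨rfl, rfl⟩⟩
      · exact ⟨⟨⟨hy, hx⟩, hadj.symm⟩, Or.inr ⟨rfl, rfl⟩⟩

open Finset in
set_option linter.unusedSectionVars false in
variable {V : Type*} (G : SimpleGraph V) [Fintype V] [DecidableEq V] [DecidableRel G.Adj] in
lemma DSIaux_deg_split (S : Finset V) :
    ∑ v ∈ S, G.degree v = 2 * DSI.mOn G S + ∑ v ∈ S, (Sᶜ.filter (G.Adj v)).card := by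
  rw [← DSIaux_handshake, ← Finset.sum_add_distrib]
  refine Finset.sum_congr rfl fun v hv => ?_
  have h : G.degree v = (Finset.univ.filter (G.Adj v)).card := by
    rw [← SimpleGraph.neighborFinset_eq_filter]; rfl
  rw [h, ← Finset.union_compl S, Finset.filter_union,
    Finset.card_union_of_disjoint (Finset.disjoint_filter_filter disjoint_compl_right)]

open Finset in
set_option linter.unusedSectionVars false in
variable {V : Type*} (G : SimpleGraph V) [Fintype V] [DecidableEq V] [DecidableRel G.Adj] in
lemma DSIaux_esize_split (S : Finset V) :
    DSI.esize G = DSI.mOn G S + DSI.mOn G Sᶜ + ∑ v ∈ S, (Sᶜ.filter (G.Adj v)).card := by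
  classical
  set E := (Finset.univ : Finset V).sym2.filter (fun e => e ∈ G.edgeSet) with hEdef
  have hE : DSI.esize G = E.card := by
    rw [DSI.esize]
    congr 1
    ext e
    simp [hEdef, Finset.sym2_univ, SimpleGraph.mem_edgeFinset]
  have h1 : (E.filter (fun e => e ∈ S.sym2)).card
      + (E.filter (fun e => ¬ e ∈ S.sym2)).card = E.card :=
    Finset.card_filter_add_card_filter_not _
  have h2 : ((E.filter (fun e => ¬ e ∈ S.sym2)).filter (fun e => e ∈ Sᶜ.sym2)).card
      + ((E.filter (fun e => ¬ e ∈ S.sym2)).filter (fun e => ¬ e ∈ Sᶜ.sym2)).card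
      = (E.filter (fun e => ¬ e ∈ S.sym2)).card :=
    Finset.card_filter_add_card_filter_not _
  have hA : E.filter (fun e => e ∈ S.sym2) = S.sym2.filter (fun e => e ∈ G.edgeSet) := by
    ext e
    simp only [hEdef, Finset.filter_filter, Finset.mem_filter, Finset.sym2_univ, Finset.mem_univ,
      true_and]
    tauto
  have hB : (E.filter (fun e => ¬ e ∈ S.sym2)).filter (fun e => e ∈ Sᶜ.sym2)
      = Sᶜ.sym2.filter (fun e => e ∈ G.edgeSet) := by
    ext e
    refine Sym2.inductionOn e fun x y => ?_
    simp only [hEdef, Finset.filter_filter, Finset.mem_filter, Finset.sym2_univ, Finset.mem_univ,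
      Finset.mk_mem_sym2_iff, Finset.mem_compl, true_and]
    tauto
  have hC : ((S ×ˢ Sᶜ).filter fun p => G.Adj p.1 p.2).card
      = ((E.filter (fun e => ¬ e ∈ S.sym2)).filter (fun e => ¬ e ∈ Sᶜ.sym2)).card := by
    apply Finset.card_bij (fun (p : V × V) _ => Sym2.mk p.1 p.2)
    · rintro ⟨a, b⟩ hp
      simp only [Finset.mem_filter, Finset.mem_product, Finset.mem_compl] at hp
      obtain ⟨⟨hp1, hp2⟩, hadj⟩ := hp
      simp only [hEdef, Finset.filter_filter, Finset.mem_filter, Finset.sym2_univ, Finset.mem_univ,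
        true_and, SimpleGraph.mem_edgeSet, Finset.mk_mem_sym2_iff, Finset.mem_compl]
      exact ⟨⟨hadj, fun h => hp2 h.2⟩, fun h => h.1 hp1⟩
    · rintro ⟨a, b⟩ ha ⟨c, d⟩ hc h
      simp only [Finset.mem_filter, Finset.mem_product, Finset.mem_compl] at ha hc
      rcases Sym2.mk_eq_mk_iff.mp h with h' | h'
      · exact h'
      · exfalso
        simp only [Prod.swap_prod_mk, Prod.mk.injEq] at h'
        obtain ⟨rfl, rfl⟩ := h'
        exact absurd hc.1.1 ha.1.2
    · intro e he
      revert he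
      refine Sym2.inductionOn e fun x y he => ?_
      simp only [hEdef, Finset.filter_filter, Finset.mem_filter, Finset.sym2_univ, Finset.mem_univ,
        true_and, SimpleGraph.mem_edgeSet, Finset.mk_mem_sym2_iff, Finset.mem_compl] at he
      obtain ⟨⟨hadj, hnS⟩, hnC⟩ := he
      by_cases hx : x ∈ S
      · have hy : y ∉ S := fun hy => hnS ⟨hx, hy⟩
        exact ⟨(x, y), by simp [Finset.mem_filter, Finset.mem_product, hx, hy, hadj], rfl⟩
      · have hy : y ∈ S := by
          by_contra hy
          exact hnC ⟨hx, hy⟩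
        refine ⟨(y, x), by simp [Finset.mem_filter, Finset.mem_product, hx, hy, hadj.symm], ?_⟩
        exact Sym2.eq_swap
  rw [hE, ← h1, ← h2, hA, hB, DSI.mOn, DSI.mOn, ← DSIaux_prod_filter_card, hC]
  ring

open Finset in
set_option linter.unusedSectionVars false in
variable {V : Type*} (G : SimpleGraph V) [Fintype V] [DecidableEq V] [DecidableRel G.Adj] in
lemma DSIaux_sum_deg_le (T : Finset V) :
    ∑ v ∈ T, G.degree v ≤ DSI.sumLargest G T.card := by
  have hsub : Multiset.map (fun v => G.degree v) T.val
      ≤ Multiset.map (fun v => G.degree v) Finset.univ.val :=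
    Multiset.map_le_map (Finset.val_le_iff.mpr (Finset.subset_univ T))
  have hsort : ((DSI.dseq G).reverse).Pairwise (fun a b => b ≤ a) := by
    rw [List.pairwise_reverse]
    exact Multiset.pairwise_sort _ _
  have hco : (↑((DSI.dseq G).reverse) : Multiset ℕ)
      = Multiset.map (fun v => G.degree v) Finset.univ.val := by
    rw [Multiset.coe_reverse, DSI.dseq, Multiset.sort_eq]
  have h := DSIaux_sub_sum_le_take _ hsort (Multiset.map (fun v => G.degree v) T.val)
    (by rw [hco]; exact hsub)
  rw [Multiset.card_map] at h
  rw [DSI.sumLargest, Finset.sum_eq_multiset_sum, Finset.card_def]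
  exact h
theorem cJ_le_alphaJ {V : Type*} (G : SimpleGraph V) [Fintype V]
    [DecidableEq V] [DecidableRel G.Adj] (j : ℕ) (hj : 1 ≤ j) :
    DSI.cJ G j ≤ DSI.alphaJ G j := by
  classical
  have hA0 : 0 ∈ {k | ∃ I : Finset V, DSI.JIndep G j I ∧ I.card = k} :=
    ⟨∅, fun v hv => absurd hv (by simp), Finset.card_empty⟩
  have hAb : BddAbove {k | ∃ I : Finset V, DSI.JIndep G j I ∧ I.card = k} := by
    refine ⟨Fintype.card V, fun k hk => ?_⟩
    obtain ⟨I, -, rfl⟩ := hk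
    exact Finset.card_le_univ I
  have hmem := Nat.sSup_mem ⟨0, hA0⟩ hAb
  obtain ⟨I₀, hI₀, hI₀c⟩ := hmem
  have halpha_le : DSI.alphaJ G j ≤ Fintype.card V := by
    apply csSup_le ⟨0, hA0⟩
    rintro k ⟨I, -, rfl⟩
    exact Finset.card_le_univ I
  have hF : (DSI.maxJIndep G j).Nonempty := ⟨I₀, hI₀, hI₀c⟩
  have himg : ((fun S : Finset V => (DSI.mOn G Sᶜ : ℤ) - (DSI.mOn G S : ℤ)) ''
      DSI.maxJIndep G j).Nonempty := hF.image _
  have hfin : ((fun S : Finset V => (DSI.mOn G Sᶜ : ℤ) - (DSI.mOn G S : ℤ)) ''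
      DSI.maxJIndep G j).Finite := Set.toFinite _
  obtain ⟨S, hS, hfS⟩ := Set.Nonempty.csInf_mem himg hfin
  apply Nat.sInf_le
  refine ⟨halpha_le, ?_⟩
  have hfL : DSI.fL G j = (DSI.mOn G Sᶜ : ℤ) - (DSI.mOn G S : ℤ) := hfS.symm
  rw [hfL]
  have e1 : DSI.esize G + DSI.mOn G S
      = (∑ v ∈ S, G.degree v) + DSI.mOn G Sᶜ := by
    rw [DSIaux_esize_split G S, DSIaux_deg_split G S]
    ring
  have e2 : ∑ v ∈ S, G.degree v ≤ DSI.sumLargest G (DSI.alphaJ G j) := by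
    rw [← hS.2]
    exact DSIaux_sum_deg_le G S
  have e1' : (DSI.esize G : ℤ) + (DSI.mOn G S : ℤ)
      = ((∑ v ∈ S, G.degree v : ℕ) : ℤ) + (DSI.mOn G Sᶜ : ℤ) := by exact_mod_cast e1
  have e2' : ((∑ v ∈ S, G.degree v : ℕ) : ℤ) ≤ (DSI.sumLargest G (DSI.alphaJ G j) : ℤ) := by
    exact_mod_cast e2
  linarith
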